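/- Let R be a ring and θ an additive invariant on finite-length R-modules. Then (𝓘_θ, 𝓟̄_θ) is a torsion pair: (a) if M lies in 𝓘_θ and N lies in 𝓟̄_θ, then every R-linear map M → N is zero; and (b) every finite-length R-module T possesses a submodule X such that X lies in 𝓘_θ and T/X lies in 𝓟̄_θ. -/

import Mathlib

universe u

/-- An *additive invariant* on finite-length modules over a ring `R`: an assignment of a real
number to every module (whose value is only constrained on finite-length modules) that is
invariant under isomorphism and additive in short exact sequences. -/
structure AdditiveInvariant (R : Type u) [Ring R] where
  /-- The value of the invariant on a module. -/
  val : (M : Type u) → [AddCommGroup M] → [Module R M] → ℝ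
  /-- Isomorphism invariance on finite-length modules. -/
  iso_inv : ∀ (M N : Type u) [AddCommGroup M] [Module R M] [AddCommGroup N] [Module R N],
    IsFiniteLength R M → (M ≃ₗ[R] N) → val M = val N
  /-- Additivity with respect to submodules and quotients, on finite-length modules. -/
  additive : ∀ (M : Type u) [AddCommGroup M] [Module R M], IsFiniteLength R M →
    ∀ N : Submodule R M, val M = val N + val (M ⧸ N)

variable {R : Type u} [Ring R]

/-- `M` lies in `𝓘_θ`: every nonzero quotient `Q` of `M` satisfies `θ(Q) > 0`. -/
def MemI (θ : AdditiveInvariant R) (M : Type u) [AddCommGroup M] [Module R M] : Prop :=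
  ∀ N : Submodule R M, N ≠ ⊤ → 0 < θ.val (M ⧸ N)

/-- `M` lies in `𝓘̄_θ`: every nonzero quotient `Q` of `M` satisfies `θ(Q) ≥ 0`. -/
def MemIbar (θ : AdditiveInvariant R) (M : Type u) [AddCommGroup M] [Module R M] : Prop :=
  ∀ N : Submodule R M, N ≠ ⊤ → 0 ≤ θ.val (M ⧸ N)

/-- `M` lies in `𝓟_θ`: every nonzero submodule `X` of `M` satisfies `θ(X) < 0`. -/
def MemP (θ : AdditiveInvariant R) (M : Type u) [AddCommGroup M] [Module R M] : Prop :=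
  ∀ X : Submodule R M, X ≠ ⊥ → θ.val X < 0

/-- `M` lies in `𝓟̄_θ`: every nonzero submodule `X` of `M` satisfies `θ(X) ≤ 0`. -/
def MemPbar (θ : AdditiveInvariant R) (M : Type u) [AddCommGroup M] [Module R M] : Prop :=
  ∀ X : Submodule R M, X ≠ ⊥ → θ.val X ≤ 0

/-- `M` is `θ`-semistable: `θ(M) = 0` and every submodule `X` of `M` satisfies `θ(X) ≤ 0`. -/
def Semistable (θ : AdditiveInvariant R) (M : Type u) [AddCommGroup M] [Module R M] : Prop :=
  θ.val M = 0 ∧ ∀ X : Submodule R M, θ.val X ≤ 0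

lemma fl_sub {M : Type u} [AddCommGroup M] [Module R M] (h : IsFiniteLength R M)
    (N : Submodule R M) : IsFiniteLength R N := by
  rw [isFiniteLength_iff_isNoetherian_isArtinian] at h ⊢
  obtain ⟨h1, h2⟩ := h
  exact ⟨inferInstance, inferInstance⟩

lemma fl_quot {M : Type u} [AddCommGroup M] [Module R M] (h : IsFiniteLength R M)
    (N : Submodule R M) : IsFiniteLength R (M ⧸ N) := by
  rw [isFiniteLength_iff_isNoetherian_isArtinian] at h ⊢
  obtain ⟨h1, h2⟩ := h
  exact ⟨inferInstance, inferInstance⟩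

lemma val_zero (θ : AdditiveInvariant R) (Z : Type u) [AddCommGroup Z] [Module R Z]
    [Subsingleton Z] : θ.val Z = 0 := by
  have hfl : IsFiniteLength R Z := .of_subsingleton
  have h := θ.additive Z hfl ⊤
  have e1 : θ.val ((⊤ : Submodule R Z) : Type u) = θ.val Z :=
    θ.iso_inv _ _ (fl_sub hfl ⊤) Submodule.topEquiv
  have e2 : θ.val (Z ⧸ (⊤ : Submodule R Z)) = θ.val Z :=
    θ.iso_inv _ _ (fl_quot hfl ⊤) (LinearEquiv.ofSubsingleton _ _)
  rw [e1, e2] at h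
  linarith

lemma val_quot (θ : AdditiveInvariant R) {M : Type u} [AddCommGroup M] [Module R M]
    (h : IsFiniteLength R M) (N : Submodule R M) :
    θ.val (M ⧸ N) = θ.val M - θ.val N := by
  have := θ.additive M h N; linarith

lemma memI_of_equiv (θ : AdditiveInvariant R) {M N : Type u} [AddCommGroup M] [Module R M]
    [AddCommGroup N] [Module R N] (hM : IsFiniteLength R M) (e : M ≃ₗ[R] N)
    (h : MemI θ M) : MemI θ N := by
  intro Q hQ
  have hmap : (Q.comap (e : M →ₗ[R] N)).map (e : M →ₗ[R] N) = Q :=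
    Submodule.map_comap_eq_of_surjective e.surjective Q
  have hQ' : Q.comap (e : M →ₗ[R] N) ≠ ⊤ := by
    intro hc
    apply hQ
    rw [← hmap, hc, Submodule.map_top, LinearEquiv.range]
  have := h _ hQ'
  rwa [θ.iso_inv _ _ (fl_quot hM _) (Submodule.Quotient.equiv _ Q e hmap)] at this

lemma exists_memI (θ : AdditiveInvariant R) {W : Type u} [AddCommGroup W] [Module R W]
    (hW : IsFiniteLength R W) {S : Submodule R W} (hS : 0 < θ.val S) :
    ∃ V : Submodule R W, V ≠ ⊥ ∧ 0 < θ.val V ∧ MemI θ V := by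
  haveI : IsArtinian R W := (isFiniteLength_iff_isNoetherian_isArtinian.mp hW).2
  obtain ⟨V, hVmem, hmin⟩ := (wellFounded_lt (α := Submodule R W)).has_min
    {V : Submodule R W | 0 < θ.val V} ⟨S, hS⟩
  refine ⟨V, ?_, hVmem, ?_⟩
  · rintro rfl
    have : (0:ℝ) < θ.val (⊥ : Submodule R W) := hVmem
    rw [val_zero θ] at this
    exact lt_irrefl 0 this
  · intro N hN
    have hflV : IsFiniteLength R V := fl_sub hW V
    rw [val_quot θ hflV N]
    have hlt : N.map V.subtype < V := by
      refine lt_of_le_of_ne (Submodule.map_subtype_le V N) ?_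
      intro hc
      apply hN
      apply Submodule.map_injective_of_injective V.injective_subtype
      rw [Submodule.map_top, Submodule.range_subtype]
      exact hc
    have hNval : θ.val N = θ.val (N.map V.subtype) :=
      θ.iso_inv _ _ (fl_sub hflV N) (Submodule.equivMapOfInjective _ V.injective_subtype N)
    have : ¬ 0 < θ.val (N.map V.subtype) := fun hpos => hmin _ hpos hlt
    have hVpos : (0:ℝ) < θ.val V := hVmem
    rw [hNval]
    linarith [not_lt.mp this]

lemma memI_ext (θ : AdditiveInvariant R) {M : Type u} [AddCommGroup M] [Module R M]
    (hM : IsFiniteLength R M) (A : Submodule R M)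
    (hA : MemI θ A) (hQ : MemI θ (M ⧸ A)) : MemI θ M := by
  intro N hN
  have hMN : IsFiniteLength R (M ⧸ N) := fl_quot hM N
  have h1 := θ.additive (M ⧸ N) hMN (A.map N.mkQ)
  set f : (A : Type u) →ₗ[R] M ⧸ N := N.mkQ.comp A.subtype with hf
  have hker : LinearMap.ker f = N.comap A.subtype := by
    rw [hf, LinearMap.ker_comp, Submodule.ker_mkQ]
  have hrange : LinearMap.range f = A.map N.mkQ := by
    rw [hf, LinearMap.range_comp, Submodule.range_subtype]
  have hfirst : θ.val (A.map N.mkQ) = θ.val ((A : Type u) ⧸ N.comap A.subtype) := by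
    refine (θ.iso_inv _ _ (fl_quot (fl_sub hM A) _) ?_).symm
    exact (Submodule.quotEquivOfEq _ _ hker.symm).trans
      (f.quotKerEquivRange.trans (LinearEquiv.ofEq _ _ hrange))
  have hsecond : θ.val (((M ⧸ N) : Type u) ⧸ (A.map N.mkQ))
      = θ.val (((M ⧸ A) : Type u) ⧸ ((N ⊔ A).map A.mkQ)) := by
    refine θ.iso_inv _ _ (fl_quot hMN _) ?_
    exact (Submodule.quotientQuotientEquivQuotientSup N A).trans
      (Submodule.quotientQuotientEquivQuotient A (N ⊔ A) le_sup_right).symm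
  by_cases hAN : A ≤ N
  · have hcomap : N.comap A.subtype = ⊤ := by
      rw [eq_top_iff]; intro x _
      exact hAN x.2
    have hz : θ.val ((A : Type u) ⧸ N.comap A.subtype) = 0 := by
      rw [hcomap]
      haveI : Subsingleton ((A : Type u) ⧸ (⊤ : Submodule R A)) :=
        Submodule.Quotient.subsingleton_iff.mpr rfl
      exact val_zero θ _
    have hmapne : (N ⊔ A).map A.mkQ ≠ ⊤ := by
      intro hc
      apply hN
      have h2 := congrArg (Submodule.comap A.mkQ) hc
      rw [Submodule.comap_map_mkQ, Submodule.comap_top] at h2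
      rw [sup_eq_right.mpr le_sup_right, sup_eq_left.mpr hAN] at h2
      exact h2
    have hpos := hQ _ hmapne
    rw [hfirst, hz, hsecond] at h1
    rw [h1, zero_add]
    exact hpos
  · have hcomapne : N.comap A.subtype ≠ ⊤ := by
      intro hc
      apply hAN
      intro x hx
      have hmem : (⟨x, hx⟩ : A) ∈ N.comap A.subtype := hc ▸ Submodule.mem_top
      exact hmem
    have hpos1 := hA _ hcomapne
    have h2 : 0 ≤ θ.val (((M ⧸ A) : Type u) ⧸ ((N ⊔ A).map A.mkQ)) := by
      by_cases hc : (N ⊔ A).map A.mkQ = ⊤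
      · rw [hc]
        haveI : Subsingleton (((M ⧸ A) : Type u) ⧸ (⊤ : Submodule R (M ⧸ A))) :=
          Submodule.Quotient.subsingleton_iff.mpr rfl
        rw [val_zero θ]
      · exact le_of_lt (hQ _ hc)
    rw [hfirst, hsecond] at h1
    rw [h1]
    exact add_pos_of_pos_of_nonneg hpos1 h2

/-- **Proposition.** `(𝓘_θ, 𝓟̄_θ)` is a torsion pair on finite-length `R`-modules:
(a) every `R`-linear map from a module in `𝓘_θ` to a module in `𝓟̄_θ` is zero, and
(b) every finite-length module `T` has a submodule `X` with `X ∈ 𝓘_θ` and `T/X ∈ 𝓟̄_θ`. -/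
theorem torsionPair_I_Pbar (R : Type u) [Ring R] (θ : AdditiveInvariant R) :
    (∀ (M N : Type u) [AddCommGroup M] [Module R M] [AddCommGroup N] [Module R N],
        IsFiniteLength R M → IsFiniteLength R N →
        MemI θ M → MemPbar θ N → ∀ f : M →ₗ[R] N, f = 0) ∧
    (∀ (T : Type u) [AddCommGroup T] [Module R T], IsFiniteLength R T →
        ∃ X : Submodule R T, MemI θ X ∧ MemPbar θ (T ⧸ X)) := by
  constructor
  · intro M N _ _ _ _ hM hN hI hP f
    by_contra hf
    have hker : LinearMap.ker f ≠ ⊤ := fun hc => hf (LinearMap.ker_eq_top.mp hc)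
    have hrange : LinearMap.range f ≠ ⊥ := fun hc => hf (LinearMap.range_eq_bot.mp hc)
    have h1 := hI _ hker
    have h2 := hP _ hrange
    rw [θ.iso_inv _ _ (fl_quot hM _) f.quotKerEquivRange] at h1
    linarith
  · intro T _ _ hT
    haveI : IsNoetherian R T := (isFiniteLength_iff_isNoetherian_isArtinian.mp hT).1
    have hbot : MemI θ (⊥ : Submodule R T) := by
      intro N hN
      exfalso
      apply hN
      rw [eq_top_iff]
      intro x _
      rw [Subsingleton.elim x 0]
      exact N.zero_mem
    obtain ⟨X, hXI, hXmax⟩ := (wellFounded_gt (α := Submodule R T)).has_min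
      {X : Submodule R T | MemI θ X} ⟨⊥, hbot⟩
    refine ⟨X, hXI, ?_⟩
    intro S hSne
    by_contra hpos
    push_neg at hpos
    have hflQ : IsFiniteLength R (T ⧸ X) := fl_quot hT X
    obtain ⟨V, hVne, hVpos, hVI⟩ := exists_memI θ hflQ hpos
    set Y := V.comap X.mkQ with hYdef
    have hXY : X ≤ Y := by
      intro x hx
      show X.mkQ x ∈ V
      rw [show X.mkQ x = 0 from (Submodule.Quotient.mk_eq_zero X).mpr hx]
      exact V.zero_mem
    have hmapY : Y.map X.mkQ = V := Submodule.map_comap_eq_of_surjective X.mkQ_surjective V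
    have hlt : X < Y := by
      refine lt_of_le_of_ne hXY ?_
      intro hc
      apply hVne
      rw [← hmapY, ← hc]
      rw [eq_bot_iff]
      rintro v ⟨y, hy, rfl⟩
      rw [Submodule.mem_bot]
      exact (Submodule.Quotient.mk_eq_zero X).mpr hy
    -- Y is an extension of X by V, hence in 𝓘
    have hA : MemI θ (X.comap Y.subtype) :=
      memI_of_equiv θ (fl_sub hT X) (Submodule.comapSubtypeEquivOfLe hXY).symm hXI
    set g : (Y : Type u) →ₗ[R] T ⧸ X := X.mkQ.comp Y.subtype with hg
    have hkerg : LinearMap.ker g = X.comap Y.subtype := by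
      rw [hg, LinearMap.ker_comp, Submodule.ker_mkQ]
    have hrangeg : LinearMap.range g = V := by
      rw [hg, LinearMap.range_comp, Submodule.range_subtype, hmapY]
    have hQ : MemI θ (((Y : Type u)) ⧸ X.comap Y.subtype) := by
      refine memI_of_equiv θ (fl_sub hflQ V) ?_ hVI
      exact ((LinearEquiv.ofEq _ _ hrangeg.symm).trans g.quotKerEquivRange.symm).trans
        (Submodule.quotEquivOfEq _ _ hkerg)
    have hYI : MemI θ Y := memI_ext θ (fl_sub hT Y) (X.comap Y.subtype) hA hQ
    exact hXmax Y hYI hlt
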